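/- Key-leakage comparison inequality (chain (45) in the equivocation analysis of Theorem 2). Let C, R₁, R₂, R_c, R_p, E, Z be random variables on finite sets such that: (i) (R_c, R_p) = M(R₁, R₂) for some injective (one-to-one) map M; (ii) R₁ = M'(R_c) for some map M'; and (iii) Z and E are conditionally independent given (C, R₁, R₂). Then I(R₂; E | C, R₁) − I(R_p; E | C, R_c, Z) ≥ 0. -/

import Mathlib

open scoped BigOperators Classical

noncomputable section

/-- The function `x ↦ -x·log₂ x` used in Shannon entropy (with `0·log 0 = 0`). -/
def nH (x : ℝ) : ℝ := -(x * Real.logb 2 x)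

/-- Shannon entropy (in bits) of a pmf on a finite set. -/
def Hent {S : Type*} [Fintype S] (p : S → ℝ) : ℝ := ∑ s, nH (p s)

/-- Pushforward of a pmf along a map: the distribution of the random variable `f`. -/
def pmap {Ω S : Type*} [Fintype Ω] (p : Ω → ℝ) (f : Ω → S) : S → ℝ :=
  fun s => ∑ ω, if f ω = s then p ω else 0

/-- Entropy (in bits) of the random variable `f` on the finite probability space `(Ω, p)`. -/
def entOf {Ω S : Type*} [Fintype Ω] [Fintype S] (p : Ω → ℝ) (f : Ω → S) : ℝ :=
  Hent (pmap p f)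

/-- Conditional Shannon entropy `H(f | g)` (in bits). -/
def condEnt {Ω S T : Type*} [Fintype Ω] [Fintype S] [Fintype T]
    (p : Ω → ℝ) (f : Ω → S) (g : Ω → T) : ℝ :=
  entOf p (fun ω => (f ω, g ω)) - entOf p g

/-- Mutual information `I(f; g)` (in bits). -/
def MI {Ω S T : Type*} [Fintype Ω] [Fintype S] [Fintype T]
    (p : Ω → ℝ) (f : Ω → S) (g : Ω → T) : ℝ :=
  entOf p f + entOf p g - entOf p (fun ω => (f ω, g ω))

/-- Conditional mutual information `I(f; g | h)` (in bits). -/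
def CMI {Ω S T W : Type*} [Fintype Ω] [Fintype S] [Fintype T] [Fintype W]
    (p : Ω → ℝ) (f : Ω → S) (g : Ω → T) (h : Ω → W) : ℝ :=
  entOf p (fun ω => (f ω, h ω)) + entOf p (fun ω => (g ω, h ω))
    - entOf p (fun ω => (f ω, g ω, h ω)) - entOf p h

/-- `p` is a probability mass function on the finite set `S`. -/
def IsPMF {S : Type*} [Fintype S] (p : S → ℝ) : Prop :=
  (∀ s, 0 ≤ p s) ∧ ∑ s, p s = 1

/-- `W` is a transition probability (stochastic kernel) from `S` to `T`. -/
def IsKernel {S T : Type*} [Fintype S] [Fintype T] (W : S → T → ℝ) : Prop :=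
  ∀ s, IsPMF (W s)

set_option linter.unusedSectionVars false
set_option maxHeartbeats 1000000


/- ### Auxiliary lemmas -/

section AuxLemmas

lemma nH_zero' : nH 0 = 0 := by simp [nH]

lemma entOf_comp_inj {Ω S T : Type*} [Fintype Ω] [Fintype S] [Fintype T]
    (p : Ω → ℝ) {f : Ω → S} {g : Ω → T} (σ : S → T)
    (hσ : Function.Injective σ) (hfg : ∀ ω, g ω = σ (f ω)) :
    entOf p g = entOf p f := by
  unfold entOf Hent
  have hzero : ∀ t ∈ Finset.univ, t ∉ Finset.image σ Finset.univ → nH (pmap p g t) = 0 := by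
    intro t _ ht
    have hz : pmap p g t = 0 := by
      apply Finset.sum_eq_zero
      intro ω _
      rw [if_neg]
      intro h
      exact ht (Finset.mem_image.2 ⟨f ω, Finset.mem_univ _, by rw [← hfg ω, h]⟩)
    rw [hz, nH_zero']
  rw [← Finset.sum_subset (Finset.subset_univ (Finset.image σ Finset.univ)) hzero]
  rw [Finset.sum_image (fun a _ b _ h => hσ h)]
  apply Finset.sum_congr rfl
  intro s _
  congr 1
  apply Finset.sum_congr rfl
  intro ω _
  apply if_congr _ rfl rfl
  rw [hfg ω]
  exact ⟨fun h => hσ h, fun h => by rw [h]⟩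

end AuxLemmas

section marg
variable {Ω S T W : Type*} [Fintype Ω] [Fintype S] [Fintype T] [Fintype W]
variable (p : Ω → ℝ) (f : Ω → S) (g : Ω → T) (h : Ω → W)

lemma pmap_nonneg (hp : ∀ ω, 0 ≤ p ω) (F : Ω → S) (s : S) : 0 ≤ pmap p F s :=
  Finset.sum_nonneg fun ω _ => by split <;> simp [hp ω]

lemma sum_pmap (F : Ω → S) : ∑ s, pmap p F s = ∑ ω, p ω := by
  unfold pmap
  rw [Finset.sum_comm]
  refine Finset.sum_congr rfl fun ω _ => ?_
  simp [Finset.sum_ite_eq]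

lemma pmargF (s : S) (w : W) :
    pmap p (fun ω => (f ω, h ω)) (s, w)
      = ∑ t, pmap p (fun ω => (f ω, g ω, h ω)) (s, t, w) := by
  unfold pmap
  rw [Finset.sum_comm]
  refine Finset.sum_congr rfl fun ω _ => ?_
  by_cases hc : f ω = s ∧ h ω = w
  · rw [if_pos (by simp [hc.1, hc.2])]
    rw [Finset.sum_eq_single (g ω)]
    · rw [if_pos (by simp [hc.1, hc.2])]
    · intro t _ ht
      rw [if_neg (by simp [Prod.ext_iff]; tauto)]
    · simp
  · rw [if_neg (by simp [Prod.ext_iff]; tauto)]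
    refine (Finset.sum_eq_zero fun t _ => ?_).symm
    rw [if_neg (by simp [Prod.ext_iff]; tauto)]

lemma pmargG (t : T) (w : W) :
    pmap p (fun ω => (g ω, h ω)) (t, w)
      = ∑ s, pmap p (fun ω => (f ω, g ω, h ω)) (s, t, w) := by
  unfold pmap
  rw [Finset.sum_comm]
  refine Finset.sum_congr rfl fun ω _ => ?_
  by_cases hc : g ω = t ∧ h ω = w
  · rw [if_pos (by simp [hc.1, hc.2])]
    rw [Finset.sum_eq_single (f ω)]
    · rw [if_pos (by simp [hc.1, hc.2])]
    · intro s _ hs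
      rw [if_neg (by simp [Prod.ext_iff]; tauto)]
    · simp
  · rw [if_neg (by simp [Prod.ext_iff]; tauto)]
    refine (Finset.sum_eq_zero fun s _ => ?_).symm
    rw [if_neg (by simp [Prod.ext_iff]; tauto)]

lemma pmargH (w : W) :
    pmap p h w = ∑ s, ∑ t, pmap p (fun ω => (f ω, g ω, h ω)) (s, t, w) := by
  have : ∀ s, ∑ t, pmap p (fun ω => (f ω, g ω, h ω)) (s, t, w)
      = pmap p (fun ω => (f ω, h ω)) (s, w) := fun s => (pmargF p f g h s w).symm
  simp only [this]
  unfold pmap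
  rw [Finset.sum_comm]
  refine Finset.sum_congr rfl fun ω _ => ?_
  by_cases hc : h ω = w
  · rw [if_pos hc]
    rw [Finset.sum_eq_single (f ω)]
    · rw [if_pos (by simp [hc])]
    · intro s _ hs
      rw [if_neg (by simp [Prod.ext_iff]; tauto)]
    · simp
  · rw [if_neg hc]
    refine (Finset.sum_eq_zero fun s _ => ?_).symm
    rw [if_neg (by simp [Prod.ext_iff]; tauto)]

end marg
lemma term_bound (qv Av Bv Cv : ℝ) (hq : 0 ≤ qv) (hA : qv ≤ Av) (hB : qv ≤ Bv)
    (hAC : Av ≤ Cv) :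
    (qv - Av * Bv / Cv) / Real.log 2 ≤
      qv * Real.logb 2 qv + qv * Real.logb 2 Cv - qv * Real.logb 2 Av - qv * Real.logb 2 Bv := by
  have hlog2 : 0 < Real.log 2 := Real.log_pos one_lt_two
  rcases eq_or_lt_of_le hq with h | h
  · have hA0 : 0 ≤ Av := le_trans hq hA
    have hB0 : 0 ≤ Bv := le_trans hq hB
    have hC0 : 0 ≤ Cv := le_trans hA0 hAC
    have : Av * Bv / Cv ≥ 0 := div_nonneg (mul_nonneg hA0 hB0) hC0
    rw [← h]
    simp only [zero_mul, add_zero, sub_zero, zero_sub, zero_add]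
    apply div_nonpos_of_nonpos_of_nonneg _ hlog2.le
    linarith
  · have hA0 : 0 < Av := lt_of_lt_of_le h hA
    have hB0 : 0 < Bv := lt_of_lt_of_le h hB
    have hC0 : 0 < Cv := lt_of_lt_of_le hA0 hAC
    have hRHS : qv * Real.logb 2 qv + qv * Real.logb 2 Cv - qv * Real.logb 2 Av
        - qv * Real.logb 2 Bv = qv * Real.log (qv * Cv / (Av * Bv)) / Real.log 2 := by
      rw [Real.log_div (by positivity) (by positivity), Real.log_mul (ne_of_gt h) (ne_of_gt hC0),
        Real.log_mul (ne_of_gt hA0) (ne_of_gt hB0)]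
      simp only [Real.logb]
      field_simp
      ring
    rw [hRHS]
    rw [div_le_div_iff_of_pos_right hlog2]
    have h2 : Real.log (Av * Bv / (qv * Cv)) ≤ Av * Bv / (qv * Cv) - 1 :=
      Real.log_le_sub_one_of_pos (by positivity)
    have h3 : Real.log (qv * Cv / (Av * Bv)) = - Real.log (Av * Bv / (qv * Cv)) := by
      rw [← Real.log_inv]
      congr 1
      field_simp
    have h4 : qv * (Av * Bv / (qv * Cv)) = Av * Bv / Cv := by
      field_simp
    rw [h3]
    nlinarith [mul_le_mul_of_nonneg_left h2 hq]

lemma nH_sum {ι : Type*} [Fintype ι] (f : ι → ℝ) :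
    nH (∑ i, f i) = ∑ i, -(f i * Real.logb 2 (∑ j, f j)) := by
  simp only [nH]
  rw [Finset.sum_mul]
  exact (Finset.sum_neg_distrib _).symm

lemma nH_sum2 {ι κ : Type*} [Fintype ι] [Fintype κ] (f : ι → κ → ℝ) :
    nH (∑ i, ∑ j, f i j) = ∑ i, ∑ j, -(f i j * Real.logb 2 (∑ i', ∑ j', f i' j')) := by
  rw [nH_sum (fun i => ∑ j, f i j)]
  refine Finset.sum_congr rfl fun i _ => ?_
  rw [Finset.sum_mul]
  exact (Finset.sum_neg_distrib _).symm

lemma gibbs {S T W : Type*} [Fintype S] [Fintype T] [Fintype W]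
    (q : S × T × W → ℝ) (h0 : ∀ x, 0 ≤ q x) (h1 : ∑ x, q x = 1) :
    0 ≤ (∑ s, ∑ w, nH (∑ t, q (s, t, w))) + (∑ t, ∑ w, nH (∑ s, q (s, t, w)))
      - (∑ x, nH (q x)) - (∑ w, nH (∑ s, ∑ t, q (s, t, w))) := by
  classical
  have h1' : ∑ s, ∑ t, ∑ w, q (s, t, w) = 1 := by
    have := h1
    simp only [Fintype.sum_prod_type] at this
    exact this
  have hA0 : ∀ s w, 0 ≤ ∑ t, q (s, t, w) := fun s w => Finset.sum_nonneg fun t _ => h0 _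
  have hB0 : ∀ t w, 0 ≤ ∑ s, q (s, t, w) := fun t w => Finset.sum_nonneg fun s _ => h0 _
  have hqA : ∀ s t w, q (s, t, w) ≤ ∑ t, q (s, t, w) := fun s t w =>
    Finset.single_le_sum (fun t _ => h0 (s, t, w)) (Finset.mem_univ t)
  have hqB : ∀ s t w, q (s, t, w) ≤ ∑ s, q (s, t, w) := fun s t w =>
    Finset.single_le_sum (fun s _ => h0 (s, t, w)) (Finset.mem_univ s)
  have hAC : ∀ s w, (∑ t, q (s, t, w)) ≤ ∑ s, ∑ t, q (s, t, w) := fun s w =>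
    Finset.single_le_sum (fun s _ => hA0 s w) (Finset.mem_univ s)
  have eA : (∑ s, ∑ w, nH (∑ t, q (s, t, w)))
      = ∑ s, ∑ t, ∑ w, -(q (s, t, w) * Real.logb 2 (∑ t', q (s, t', w))) := by
    refine Finset.sum_congr rfl fun s _ => ?_
    calc (∑ w, nH (∑ t, q (s, t, w)))
        = ∑ w, ∑ t, -(q (s, t, w) * Real.logb 2 (∑ t', q (s, t', w))) :=
          Finset.sum_congr rfl fun w _ => nH_sum _
      _ = ∑ t, ∑ w, -(q (s, t, w) * Real.logb 2 (∑ t', q (s, t', w))) := Finset.sum_comm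
  have eB : (∑ t, ∑ w, nH (∑ s, q (s, t, w)))
      = ∑ s, ∑ t, ∑ w, -(q (s, t, w) * Real.logb 2 (∑ s', q (s', t, w))) := by
    calc (∑ t, ∑ w, nH (∑ s, q (s, t, w)))
        = ∑ t, ∑ w, ∑ s, -(q (s, t, w) * Real.logb 2 (∑ s', q (s', t, w))) :=
          Finset.sum_congr rfl fun t _ => Finset.sum_congr rfl fun w _ => nH_sum _
      _ = ∑ t, ∑ s, ∑ w, -(q (s, t, w) * Real.logb 2 (∑ s', q (s', t, w))) :=
          Finset.sum_congr rfl fun t _ => Finset.sum_comm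
      _ = ∑ s, ∑ t, ∑ w, -(q (s, t, w) * Real.logb 2 (∑ s', q (s', t, w))) := Finset.sum_comm
  have eQ : (∑ x, nH (q x)) = ∑ s, ∑ t, ∑ w, nH (q (s, t, w)) := by
    simp only [Fintype.sum_prod_type]
  have eC : (∑ w, nH (∑ s, ∑ t, q (s, t, w)))
      = ∑ s, ∑ t, ∑ w, -(q (s, t, w) * Real.logb 2 (∑ s', ∑ t', q (s', t', w))) := by
    calc (∑ w, nH (∑ s, ∑ t, q (s, t, w)))
        = ∑ w, ∑ s, ∑ t, -(q (s, t, w) * Real.logb 2 (∑ s', ∑ t', q (s', t', w))) :=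
          Finset.sum_congr rfl fun w _ => nH_sum2 _
      _ = ∑ s, ∑ w, ∑ t, -(q (s, t, w) * Real.logb 2 (∑ s', ∑ t', q (s', t', w))) :=
          Finset.sum_comm
      _ = ∑ s, ∑ t, ∑ w, -(q (s, t, w) * Real.logb 2 (∑ s', ∑ t', q (s', t', w))) :=
          Finset.sum_congr rfl fun s _ => Finset.sum_comm
  rw [eA, eB, eQ, eC]
  have lower : ∀ s t w,
      (q (s, t, w) - (∑ t', q (s, t', w)) * (∑ s', q (s', t, w)) / (∑ s', ∑ t', q (s', t', w)))
          / Real.log 2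
      ≤ -(q (s, t, w) * Real.logb 2 (∑ t', q (s, t', w)))
        + -(q (s, t, w) * Real.logb 2 (∑ s', q (s', t, w)))
        - nH (q (s, t, w))
        - -(q (s, t, w) * Real.logb 2 (∑ s', ∑ t', q (s', t', w))) := by
    intro s t w
    have := term_bound (q (s, t, w)) (∑ t', q (s, t', w)) (∑ s', q (s', t, w))
      (∑ s', ∑ t', q (s', t', w)) (h0 _) (hqA s t w) (hqB s t w) (hAC s w)
    simp only [nH]
    linarith
  have hlog2 : (0:ℝ) < Real.log 2 := Real.log_pos one_lt_two
  have hCw : ∀ w, ∑ s, ∑ t, (∑ t', q (s, t', w)) * (∑ s', q (s', t, w))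
      / (∑ s', ∑ t', q (s', t', w)) = ∑ s', ∑ t', q (s', t', w) := by
    intro w
    have hBsum : (∑ t, ∑ s', q (s', t, w)) = ∑ s', ∑ t', q (s', t', w) := Finset.sum_comm
    calc ∑ s, ∑ t, (∑ t', q (s, t', w)) * (∑ s', q (s', t, w)) / (∑ s', ∑ t', q (s', t', w))
        = (∑ s, ∑ t, (∑ t', q (s, t', w)) * (∑ s', q (s', t, w)))
            / (∑ s', ∑ t', q (s', t', w)) := by
          simp only [← Finset.sum_div]
      _ = ((∑ s, ∑ t', q (s, t', w)) * (∑ t, ∑ s', q (s', t, w)))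
            / (∑ s', ∑ t', q (s', t', w)) := by rw [Finset.sum_mul_sum]
      _ = ∑ s', ∑ t', q (s', t', w) := by
          rw [hBsum]
          by_cases hz : (∑ s', ∑ t', q (s', t', w)) = 0
          · rw [hz]; simp
          · field_simp
  have hM1 : ∑ w, ∑ s, ∑ t, q (s, t, w) = 1 := by
    rw [← h1']
    calc (∑ w, ∑ s, ∑ t, q (s, t, w)) = ∑ s, ∑ w, ∑ t, q (s, t, w) := Finset.sum_comm
      _ = ∑ s, ∑ t, ∑ w, q (s, t, w) := Finset.sum_congr rfl fun s _ => Finset.sum_comm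
  have hsumAB : ∑ s, ∑ t, ∑ w, (∑ t', q (s, t', w)) * (∑ s', q (s', t, w))
      / (∑ s', ∑ t', q (s', t', w)) = 1 := by
    calc ∑ s, ∑ t, ∑ w, (∑ t', q (s, t', w)) * (∑ s', q (s', t, w))
          / (∑ s', ∑ t', q (s', t', w))
        = ∑ s, ∑ w, ∑ t, (∑ t', q (s, t', w)) * (∑ s', q (s', t, w))
          / (∑ s', ∑ t', q (s', t', w)) := Finset.sum_congr rfl fun s _ => Finset.sum_comm
      _ = ∑ w, ∑ s, ∑ t, (∑ t', q (s, t', w)) * (∑ s', q (s', t, w))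
          / (∑ s', ∑ t', q (s', t', w)) := Finset.sum_comm
      _ = ∑ w, ∑ s', ∑ t', q (s', t', w) := Finset.sum_congr rfl fun w _ => hCw w
      _ = 1 := hM1
  have hsumLB : ∑ s, ∑ t, ∑ w,
      ((q (s, t, w) - (∑ t', q (s, t', w)) * (∑ s', q (s', t, w))
        / (∑ s', ∑ t', q (s', t', w))) / Real.log 2) = 0 := by
    simp only [sub_div, Finset.sum_sub_distrib, ← Finset.sum_div]
    rw [h1', hsumAB, sub_self]
  have hle : ∑ s, ∑ t, ∑ w,
      ((q (s, t, w) - (∑ t', q (s, t', w)) * (∑ s', q (s', t, w))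
        / (∑ s', ∑ t', q (s', t', w))) / Real.log 2)
      ≤ ∑ s, ∑ t, ∑ w,
        (-(q (s, t, w) * Real.logb 2 (∑ t', q (s, t', w)))
          + -(q (s, t, w) * Real.logb 2 (∑ s', q (s', t, w)))
          - nH (q (s, t, w))
          - -(q (s, t, w) * Real.logb 2 (∑ s', ∑ t', q (s', t', w)))) := by
    refine Finset.sum_le_sum fun s _ => Finset.sum_le_sum fun t _ =>
      Finset.sum_le_sum fun w _ => lower s t w
  rw [hsumLB] at hle
  calc (0:ℝ) ≤ _ := hle
    _ = _ := by simp only [Finset.sum_add_distrib, Finset.sum_sub_distrib]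

lemma cmi_nonneg {Ω S T W : Type*} [Fintype Ω] [Fintype S] [Fintype T] [Fintype W]
    (p : Ω → ℝ) (hp : IsPMF p) (f : Ω → S) (g : Ω → T) (h : Ω → W) :
    0 ≤ CMI p f g h := by
  have hq0 : ∀ x, 0 ≤ pmap p (fun ω => (f ω, g ω, h ω)) x := pmap_nonneg p hp.1 _
  have hq1 : ∑ x, pmap p (fun ω => (f ω, g ω, h ω)) x = 1 := by
    rw [sum_pmap]; exact hp.2
  have hgib := gibbs _ hq0 hq1
  unfold CMI entOf Hent
  have e1 : ∑ x : S × W, nH (pmap p (fun ω => (f ω, h ω)) x)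
      = ∑ s, ∑ w, nH (∑ t, pmap p (fun ω => (f ω, g ω, h ω)) (s, t, w)) := by
    rw [Fintype.sum_prod_type]
    exact Finset.sum_congr rfl fun s _ => Finset.sum_congr rfl fun w _ => by
      rw [pmargF p f g h]
  have e2 : ∑ x : T × W, nH (pmap p (fun ω => (g ω, h ω)) x)
      = ∑ t, ∑ w, nH (∑ s, pmap p (fun ω => (f ω, g ω, h ω)) (s, t, w)) := by
    rw [Fintype.sum_prod_type]
    exact Finset.sum_congr rfl fun t _ => Finset.sum_congr rfl fun w _ => by
      rw [pmargG p f g h]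
  have e3 : ∑ w, nH (pmap p h w)
      = ∑ w, nH (∑ s, ∑ t, pmap p (fun ω => (f ω, g ω, h ω)) (s, t, w)) := by
    refine Finset.sum_congr rfl fun w _ => ?_
    rw [pmargH p f g h]
  rw [e1, e2, e3]
  exact hgib

/-- **Key-leakage comparison inequality** (chain (45) in the equivocation analysis of
Theorem 2). If `(R_c, R_p) = M(R₁, R₂)` for an injective map `M`, `R₁ = M'(R_c)` for some
map `M'`, and `Z −∘− (C, R₁, R₂) −∘− E` is a Markov chain, then
`I(R₂; E | C, R₁) − I(R_p; E | C, R_c, Z) ≥ 0`. -/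
theorem key_leakage_comparison {Ω C K1 K2 Kc Kp Et Zt : Type*}
    [Fintype Ω] [Fintype C] [Fintype K1] [Fintype K2]
    [Fintype Kc] [Fintype Kp] [Fintype Et] [Fintype Zt]
    (p : Ω → ℝ) (hp : IsPMF p)
    (fC : Ω → C) (f1 : Ω → K1) (f2 : Ω → K2) (fc : Ω → Kc) (fp : Ω → Kp)
    (fE : Ω → Et) (fZ : Ω → Zt)
    (M : K1 × K2 → Kc × Kp) (hM : Function.Injective M)
    (hMeq : ∀ ω, (fc ω, fp ω) = M (f1 ω, f2 ω))
    (M' : Kc → K1) (hM' : ∀ ω, f1 ω = M' (fc ω))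
    (hMarkov : CMI p fZ fE (fun ω => (fC ω, f1 ω, f2 ω)) = 0) :
    0 ≤ CMI p f2 fE (fun ω => (fC ω, f1 ω))
        - CMI p fp fE (fun ω => (fC ω, fc ω, fZ ω)) := by
  have nn1 : 0 ≤ CMI p fc fE (fun ω => (fC ω, f1 ω)) := cmi_nonneg p hp fc fE _
  have nn2 : 0 ≤ CMI p fZ fE (fun ω => (fC ω, fc ω)) := cmi_nonneg p hp fZ fE _
  -- a helper for injectivity of maps built from `M`
  have e1 : entOf p (fun ω => (fp ω, (fC ω, fc ω))) = entOf p (fun ω => (f2 ω, (fC ω, f1 ω))) := by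
    refine entOf_comp_inj p
      (fun x : K2 × C × K1 => ((M (x.2.2, x.1)).2, x.2.1, (M (x.2.2, x.1)).1)) ?_ ?_
    · rintro ⟨a1, a2, a3⟩ ⟨b1, b2, b3⟩ hab
      simp only [Prod.mk.injEq] at hab
      obtain ⟨h2, hc, h1⟩ := hab
      have hMM : M (a3, a1) = M (b3, b1) := Prod.ext_iff.mpr ⟨h1, h2⟩
      have := hM hMM
      simp only [Prod.mk.injEq] at this
      simp [hc, this.1, this.2]
    · intro ω
      have h := hMeq ω
      simp only [← h]
  have e2 : entOf p (fun ω => (fp ω, (fE ω, (fC ω, fc ω))))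
      = entOf p (fun ω => (f2 ω, (fE ω, (fC ω, f1 ω)))) := by
    refine entOf_comp_inj p
      (fun x : K2 × Et × C × K1 =>
        ((M (x.2.2.2, x.1)).2, x.2.1, x.2.2.1, (M (x.2.2.2, x.1)).1)) ?_ ?_
    · rintro ⟨a1, a2, a3, a4⟩ ⟨b1, b2, b3, b4⟩ hab
      simp only [Prod.mk.injEq] at hab
      obtain ⟨h2, he, hc, h1⟩ := hab
      have hMM : M (a4, a1) = M (b4, b1) := Prod.ext_iff.mpr ⟨h1, h2⟩
      have := hM hMM
      simp only [Prod.mk.injEq] at this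
      simp [he, hc, this.1, this.2]
    · intro ω
      have h := hMeq ω
      simp only [← h]
  have e3 : entOf p (fun ω => (fc ω, (fC ω, f1 ω))) = entOf p (fun ω => (fC ω, fc ω)) := by
    refine entOf_comp_inj p (fun x : C × Kc => (x.2, x.1, M' x.2)) ?_ ?_
    · rintro ⟨a1, a2⟩ ⟨b1, b2⟩ hab
      simp only [Prod.mk.injEq] at hab
      simp [hab.1, hab.2.1]
    · intro ω
      simp [← hM' ω]
  have e4 : entOf p (fun ω => (fc ω, (fE ω, (fC ω, f1 ω))))
      = entOf p (fun ω => (fE ω, (fC ω, fc ω))) := by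
    refine entOf_comp_inj p (fun x : Et × C × Kc => (x.2.2, x.1, x.2.1, M' x.2.2)) ?_ ?_
    · rintro ⟨a1, a2, a3⟩ ⟨b1, b2, b3⟩ hab
      simp only [Prod.mk.injEq] at hab
      simp [hab.1, hab.2.1, hab.2.2.1]
    · intro ω
      simp [← hM' ω]
  have e5 : entOf p (fun ω => (fp ω, (fC ω, fc ω)))
      = entOf p (fun ω => (fC ω, (f1 ω, f2 ω))) := by
    refine entOf_comp_inj p
      (fun x : C × K1 × K2 => ((M x.2).2, x.1, (M x.2).1)) ?_ ?_
    · rintro ⟨a1, a2⟩ ⟨b1, b2⟩ hab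
      simp only [Prod.mk.injEq] at hab
      have hMM : M a2 = M b2 := Prod.ext_iff.mpr ⟨hab.2.2, hab.1⟩
      simp [hab.2.1, hM hMM]
    · intro ω
      have h := hMeq ω
      simp only [← h]
  have e6 : entOf p (fun ω => (fp ω, (fC ω, (fc ω, fZ ω))))
      = entOf p (fun ω => (fZ ω, (fC ω, (f1 ω, f2 ω)))) := by
    refine entOf_comp_inj p
      (fun x : Zt × C × K1 × K2 => ((M x.2.2).2, x.2.1, (M x.2.2).1, x.1)) ?_ ?_
    · rintro ⟨a1, a2, a3⟩ ⟨b1, b2, b3⟩ hab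
      simp only [Prod.mk.injEq] at hab
      have hMM : M a3 = M b3 := Prod.ext_iff.mpr ⟨hab.2.2.1, hab.1⟩
      simp [hab.2.1, hab.2.2.2, hM hMM]
    · intro ω
      have h := hMeq ω
      simp only [← h]
  have e7 : entOf p (fun ω => (fp ω, (fE ω, (fC ω, fc ω))))
      = entOf p (fun ω => (fE ω, (fC ω, (f1 ω, f2 ω)))) := by
    refine entOf_comp_inj p
      (fun x : Et × C × K1 × K2 => ((M x.2.2).2, x.1, x.2.1, (M x.2.2).1)) ?_ ?_
    · rintro ⟨a1, a2, a3⟩ ⟨b1, b2, b3⟩ hab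
      simp only [Prod.mk.injEq] at hab
      have hMM : M a3 = M b3 := Prod.ext_iff.mpr ⟨hab.2.2.2, hab.1⟩
      simp [hab.2.1, hab.2.2.1, hM hMM]
    · intro ω
      have h := hMeq ω
      simp only [← h]
  have e8 : entOf p (fun ω => (fp ω, (fE ω, (fC ω, (fc ω, fZ ω)))))
      = entOf p (fun ω => (fZ ω, (fE ω, (fC ω, (f1 ω, f2 ω))))) := by
    refine entOf_comp_inj p
      (fun x : Zt × Et × C × K1 × K2 =>
        ((M x.2.2.2).2, x.2.1, x.2.2.1, (M x.2.2.2).1, x.1)) ?_ ?_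
    · rintro ⟨a1, a2, a3, a4⟩ ⟨b1, b2, b3, b4⟩ hab
      simp only [Prod.mk.injEq] at hab
      have hMM : M a4 = M b4 := Prod.ext_iff.mpr ⟨hab.2.2.2.1, hab.1⟩
      simp [hab.2.1, hab.2.2.1, hab.2.2.2.2, hM hMM]
    · intro ω
      have h := hMeq ω
      simp only [← h]
  have e9 : entOf p (fun ω => (fE ω, (fC ω, (fc ω, fZ ω))))
      = entOf p (fun ω => (fZ ω, (fE ω, (fC ω, fc ω)))) := by
    refine entOf_comp_inj p
      (fun x : Zt × Et × C × Kc => (x.2.1, x.2.2.1, x.2.2.2, x.1)) ?_ ?_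
    · rintro ⟨a1, a2, a3, a4⟩ ⟨b1, b2, b3, b4⟩ hab
      simp only [Prod.mk.injEq] at hab
      simp [hab.1, hab.2.1, hab.2.2.1, hab.2.2.2]
    · intro ω
      rfl
  have e10 : entOf p (fun ω => (fC ω, (fc ω, fZ ω)))
      = entOf p (fun ω => (fZ ω, (fC ω, fc ω))) := by
    refine entOf_comp_inj p
      (fun x : Zt × C × Kc => (x.2.1, x.2.2, x.1)) ?_ ?_
    · rintro ⟨a1, a2, a3⟩ ⟨b1, b2, b3⟩ hab
      simp only [Prod.mk.injEq] at hab
      simp [hab.1, hab.2.1, hab.2.2]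
    · intro ω
      rfl
  simp only [CMI] at nn1 nn2 hMarkov ⊢
  linarith [e1, e2, e3, e4, e5, e6, e7, e8, e9, e10]
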